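/- The integral 18·∫₀^{π/4} ∫₀^{arccos(cosθ/√(1+cos²θ))} (cosθ − sinθ) cosφ sin²φ dφ dθ equals 3√3 − 3√2. -/

import Mathlib

open Real

lemma inner_int (θ : ℝ) :
    (∫ φ in (0 : ℝ)..(arccos (cos θ / sqrt (1 + cos θ ^ 2))),
        ((cos θ - sin θ) * cos φ * sin φ ^ 2)) =
      (cos θ - sin θ) / (3 * sqrt (1 + cos θ ^ 2) ^ 3) := by
  have hu : (0:ℝ) < 1 + cos θ ^ 2 := by positivity
  have hs : sqrt (1 + cos θ ^ 2) ≠ 0 := by positivity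
  set a := arccos (cos θ / sqrt (1 + cos θ ^ 2)) with ha
  have h1 : ∀ φ ∈ Set.uIcc (0:ℝ) a,
      HasDerivAt (fun x => sin x ^ 3 / 3) (cos φ * sin φ ^ 2) φ := by
    intro φ _
    have := ((Real.hasDerivAt_sin φ).fun_pow 3).div_const 3
    refine this.congr_deriv ?_
    ring
  have h2 : (∫ φ in (0:ℝ)..a, cos φ * sin φ ^ 2) = sin a ^ 3 / 3 - sin 0 ^ 3 / 3 :=
    intervalIntegral.integral_eq_sub_of_hasDerivAt h1
      ((Real.continuous_cos.mul (Real.continuous_sin.pow 2)).intervalIntegrable _ _)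
  have hsin : sin a = 1 / sqrt (1 + cos θ ^ 2) := by
    rw [ha, Real.sin_arccos, div_pow, Real.sq_sqrt hu.le,
      show 1 - cos θ ^ 2 / (1 + cos θ ^ 2) = (1 + cos θ ^ 2)⁻¹ by field_simp; ring,
      Real.sqrt_inv, one_div]
  have hval : sin a ^ 3 / 3 - sin (0:ℝ) ^ 3 / 3 = 1 / (3 * sqrt (1 + cos θ ^ 2) ^ 3) := by
    rw [hsin, Real.sin_zero]
    field_simp
    ring
  simp_rw [mul_assoc]
  rw [intervalIntegral.integral_const_mul, h2, hval, mul_one_div]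

lemma outer_int :
    (∫ θ in (0:ℝ)..(π/4), (cos θ - sin θ) / (3 * sqrt (1 + cos θ ^ 2) ^ 3)) =
      sqrt 3 / 6 - sqrt 2 / 6 := by
  have key : ∀ θ ∈ Set.uIcc (0:ℝ) (π/4),
      HasDerivAt (fun x => sin x / (6 * sqrt (1 + cos x ^ 2)) +
          cos x / (3 * sqrt (1 + cos x ^ 2)))
        ((cos θ - sin θ) / (3 * sqrt (1 + cos θ ^ 2) ^ 3)) θ := by
    intro θ _
    have hu : (0:ℝ) < 1 + cos θ ^ 2 := by positivity
    have hs : (0:ℝ) < sqrt (1 + cos θ ^ 2) := Real.sqrt_pos.mpr hu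
    have hU : HasDerivAt (fun x => 1 + cos x ^ 2)
        (2 * cos θ * (-sin θ)) θ := by
      have := (hasDerivAt_const θ (1:ℝ)).fun_add ((Real.hasDerivAt_cos θ).fun_pow 2)
      refine this.congr_deriv ?_
      ring
    have hS : HasDerivAt (fun x => sqrt (1 + cos x ^ 2))
        ((2 * cos θ * (-sin θ)) / (2 * sqrt (1 + cos θ ^ 2))) θ := hU.sqrt hu.ne'
    have h1 := (Real.hasDerivAt_sin θ).fun_div ((hasDerivAt_const θ (6:ℝ)).fun_mul hS)
      (by positivity)
    have h2 := (Real.hasDerivAt_cos θ).fun_div ((hasDerivAt_const θ (3:ℝ)).fun_mul hS)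
      (by positivity)
    have := h1.fun_add h2
    refine this.congr_deriv ?_
    have hsq : sqrt (1 + cos θ ^ 2) ^ 2 = 1 + cos θ ^ 2 := Real.sq_sqrt hu.le
    have hpyth : sin θ ^ 2 + cos θ ^ 2 = 1 := sin_sq_add_cos_sq θ
    have h6 : sqrt (1 + cos θ ^ 2) ^ 6 = (1 + cos θ ^ 2) ^ 3 := by
      rw [show (6:ℕ) = 2*3 from rfl, pow_mul, hsq]
    have h8 : sqrt (1 + cos θ ^ 2) ^ 8 = (1 + cos θ ^ 2) ^ 4 := by
      rw [show (8:ℕ) = 2*4 from rfl, pow_mul, hsq]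
    have h3 : sqrt (1 + cos θ ^ 2) ^ 3 = sqrt (1 + cos θ ^ 2) * (1 + cos θ ^ 2) := by
      rw [pow_succ' , hsq]  -- s^3 = s * s^2 ?
    field_simp
    linear_combination (54*cos θ - 108*sin θ) * hsq +
      (54*cos θ) * hpyth
  have hcont : Continuous fun θ : ℝ => (cos θ - sin θ) / (3 * sqrt (1 + cos θ ^ 2) ^ 3) := by
    apply Continuous.div (by continuity)
    · exact continuous_const.mul ((Real.continuous_sqrt.comp (by continuity)).pow 3)
    · intro θ
      have hu : (0:ℝ) < 1 + cos θ ^ 2 := by positivity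
      positivity
  rw [intervalIntegral.integral_eq_sub_of_hasDerivAt key (hcont.intervalIntegrable _ _)]
  have hsq2 : sqrt 2 ^ 2 = 2 := Real.sq_sqrt (by norm_num)
  have hsq3 : sqrt 3 ^ 2 = 3 := Real.sq_sqrt (by norm_num)
  have h2ne : sqrt 2 ≠ 0 := by positivity
  have h3ne : sqrt 3 ≠ 0 := by positivity
  have h32 : sqrt (1 + cos (π/4) ^ 2) = sqrt 3 / sqrt 2 := by
    rw [Real.cos_pi_div_four, div_pow, hsq2,
      show 1 + 2 / (2:ℝ)^2 = 3/2 by norm_num, Real.sqrt_div (by norm_num)]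
  have h20 : sqrt (1 + cos (0:ℝ) ^ 2) = sqrt 2 := by norm_num
  rw [h32, h20, Real.sin_pi_div_four, Real.cos_pi_div_four, Real.sin_zero, Real.cos_zero]
  field_simp
  ring_nf
  linear_combination (-6*Real.sqrt 2) * hsq3 +
    (6*Real.sqrt 3 + 9*Real.sqrt 2) * hsq2

theorem mu_bar_two_integral :
    18 * ∫ θ in (0 : ℝ)..(π / 4),
      ∫ φ in (0 : ℝ)..(arccos (cos θ / sqrt (1 + cos θ ^ 2))),
        ((cos θ - sin θ) * cos φ * sin φ ^ 2) =
      3 * sqrt 3 - 3 * sqrt 2 := by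
  rw [intervalIntegral.integral_congr (g := fun θ =>
      (cos θ - sin θ) / (3 * sqrt (1 + cos θ ^ 2) ^ 3))
    (fun θ _ => inner_int θ), outer_int]
  ring
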